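/- arXiv:2202.12136 — 3 statements merged into one kernel-verified Lean document; each statement's English description precedes it below -/
import Mathlib

section
/- Let H be a Hilbert space and for each parameter s in a normed space X let a_s(u,v) = a(u,v) + s·b(u,v) (with b bilinear from X × H × H to ℝ, linear in s), all a_s uniformly coercive with constant c₀ and bounded. Let F ∈ H* and u(s) solve a_s(u(s), φ) = F(φ) ∀φ. Then s ↦ u(s) is Fréchet differentiable at 0, with derivative ũ[ϑ] ∈ H the unique solution of a(ũ[ϑ], φ) = −b(ϑ)(u(0), φ) for all φ ∈ H, and ‖u(ϑ) − u(0) − ũ[ϑ]‖ ≤ (C/c₀²)‖ϑ‖²‖F‖ for some constant C depending only on the bound of b. -/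
open Filter Topology

private lemma stmt_7_aux {c K x : ℝ} (hc : 0 < c) (hK : 0 ≤ K) (hx : 0 ≤ x)
    (h : c * x ^ 2 ≤ K * x) : c * x ≤ K := by
  rcases eq_or_lt_of_le hx with h0 | h0
  · simpa [← h0] using hK
  · have := le_of_mul_le_mul_right (by nlinarith : (c * x) * x ≤ K * x) h0
    exact this

/-- Fréchet differentiability of the parameter-to-solution map for `a_s = a + b(s)`. -/
theorem stmt_7 {X H : Type*} [NormedAddCommGroup X] [NormedSpace ℝ X]
    [NormedAddCommGroup H] [InnerProductSpace ℝ H] [CompleteSpace H]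
    (a : H → H → ℝ) (b : X → H → H → ℝ) (Cb Ma c₀ : ℝ) (hc₀ : 0 < c₀) (hCb : 0 ≤ Cb)
    (halin₁ : ∀ v : H, IsLinearMap ℝ (fun u => a u v))
    (halin₂ : ∀ u : H, IsLinearMap ℝ (a u))
    (habound : ∀ u v : H, |a u v| ≤ Ma * ‖u‖ * ‖v‖)
    (hblinX : ∀ u v : H, IsLinearMap ℝ (fun s => b s u v))
    (hblin₁ : ∀ (s : X) (v : H), IsLinearMap ℝ (fun u => b s u v))
    (hblin₂ : ∀ (s : X) (u : H), IsLinearMap ℝ (b s u))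
    (hbbound : ∀ (s : X) (u v : H), |b s u v| ≤ Cb * ‖s‖ * ‖u‖ * ‖v‖)
    (hcoer : ∀ (s : X) (u : H), c₀ * ‖u‖ ^ 2 ≤ a u u + b s u u)
    (F : H →L[ℝ] ℝ) (u : X → H) (ut : X → H)
    (hu : ∀ (s : X) (φ : H), a (u s) φ + b s (u s) φ = F φ)
    (hut : ∀ (ϑ : X) (φ : H), a (ut ϑ) φ = - b ϑ (u 0) φ) :
    ∃ C : ℝ, 0 < C ∧ ∀ ϑ : X,
      ‖u ϑ - u 0 - ut ϑ‖ ≤ (C / c₀ ^ 2) * ‖ϑ‖ ^ 2 * ‖F‖ := by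
  have hb0 : ∀ p q : H, b 0 p q = 0 := fun p q => (hblinX p q).mk' .. |>.map_zero
  -- coercivity of a alone
  have hacoer : ∀ x : H, c₀ * ‖x‖ ^ 2 ≤ a x x := fun x => by
    simpa [hb0] using hcoer 0 x
  -- a priori bound on u s
  have h1 : ∀ s : X, c₀ * ‖u s‖ ≤ ‖F‖ := by
    intro s
    refine stmt_7_aux hc₀ (norm_nonneg F) (norm_nonneg _) ?_
    calc c₀ * ‖u s‖ ^ 2 ≤ a (u s) (u s) + b s (u s) (u s) := hcoer s (u s)
      _ = F (u s) := hu s (u s)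
      _ ≤ |F (u s)| := le_abs_self _
      _ ≤ ‖F‖ * ‖u s‖ := F.le_opNorm _
  refine ⟨Cb ^ 2 / c₀ + 1, by positivity, fun ϑ => ?_⟩
  set d : H := u ϑ - u 0 with hd
  set w : H := u ϑ - u 0 - ut ϑ with hw
  have ha_sub : ∀ x y φ : H, a (x - y) φ = a x φ - a y φ := fun x y φ =>
    (halin₁ φ).mk' .. |>.map_sub x y
  have hb_sub2 : ∀ (s : X) (φ x y : H), b s (x - y) φ = b s x φ - b s y φ := fun s φ x y =>
    (hblin₁ s φ).mk' .. |>.map_sub x y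
  -- identity for d
  have hdid : ∀ φ : H, a d φ = - b ϑ (u ϑ) φ := by
    intro φ
    have h₁ := hu ϑ φ
    have h₂ := hu 0 φ
    rw [hb0] at h₂
    rw [hd, ha_sub]
    linarith
  -- identity for w
  have hwid : ∀ φ : H, a w φ = - b ϑ d φ := by
    intro φ
    have h₁ := hdid φ
    have h₂ := hut ϑ φ
    rw [hw, ha_sub, hd, hb_sub2]
    rw [hd] at h₁
    linarith
  -- bound on d
  have h2 : c₀ * ‖d‖ ≤ Cb * ‖ϑ‖ * ‖u ϑ‖ := by
    refine stmt_7_aux hc₀ (by positivity) (norm_nonneg _) ?_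
    calc c₀ * ‖d‖ ^ 2 ≤ a d d := hacoer d
      _ = - b ϑ (u ϑ) d := hdid d
      _ ≤ |b ϑ (u ϑ) d| := neg_le_abs _
      _ ≤ Cb * ‖ϑ‖ * ‖u ϑ‖ * ‖d‖ := hbbound ϑ (u ϑ) d
  -- bound on w
  have h3 : c₀ * ‖w‖ ≤ Cb * ‖ϑ‖ * ‖d‖ := by
    refine stmt_7_aux hc₀ (by positivity) (norm_nonneg _) ?_
    calc c₀ * ‖w‖ ^ 2 ≤ a w w := hacoer w
      _ = - b ϑ d w := hwid w
      _ ≤ |b ϑ d w| := neg_le_abs _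
      _ ≤ Cb * ‖ϑ‖ * ‖d‖ * ‖w‖ := hbbound ϑ d w
  have h1' := h1 ϑ
  have key : c₀ ^ 3 * ‖w‖ ≤ Cb ^ 2 * ‖ϑ‖ ^ 2 * ‖F‖ := by
    nlinarith [norm_nonneg w, norm_nonneg d, norm_nonneg (u ϑ), norm_nonneg ϑ,
      mul_nonneg (mul_nonneg hCb (norm_nonneg ϑ)) (norm_nonneg d),
      mul_le_mul_of_nonneg_left h2 (mul_nonneg hCb (norm_nonneg ϑ)),
      mul_le_mul_of_nonneg_left h1' (mul_nonneg (mul_nonneg (mul_nonneg hCb hCb) (norm_nonneg ϑ)) (norm_nonneg ϑ)),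
      mul_le_mul_of_nonneg_left h3 (mul_pos (mul_pos hc₀ hc₀) hc₀).le]
  have hstep : ‖w‖ ≤ Cb ^ 2 * ‖ϑ‖ ^ 2 * ‖F‖ / c₀ ^ 3 := by
    rw [le_div_iff₀ (by positivity)]
    nlinarith [key]
  calc ‖w‖ ≤ Cb ^ 2 * ‖ϑ‖ ^ 2 * ‖F‖ / c₀ ^ 3 := hstep
    _ = (Cb ^ 2 / c₀ / c₀ ^ 2) * ‖ϑ‖ ^ 2 * ‖F‖ := by ring
    _ ≤ ((Cb ^ 2 / c₀ + 1) / c₀ ^ 2) * ‖ϑ‖ ^ 2 * ‖F‖ := by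
        gcongr
        linarith [div_nonneg (by positivity : (0:ℝ) ≤ Cb ^ 2) hc₀.le]
end

section
/- Let K be a nonempty convex subset of a Hilbert space H and J : K → ℝ Fréchet differentiable. Suppose (v^{n+1}) is generated from v^n ∈ K by the implicit variational inequality (1/τ)⟨v^{n+1} − v^n, ω − v^{n+1}⟩ + J'(v^n)[ω − v^{n+1}] + A(v^{n+1} − v^n, ω − v^{n+1}) ≥ 0 for all ω ∈ K, where A is a bounded symmetric positive semidefinite bilinear form coming from the quadratic part of J, and assume the Lipschitz-type estimate J(v^{n+1}) ≤ J(v^n) + J'(v^n)[v^{n+1} − v^n] + c₁‖v^{n+1} − v^n‖² holds. If τ ≤ 1/(1 + c₁), then ‖v^{n+1} − v^n‖² + J(v^{n+1}) ≤ J(v^n). -/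
open Filter Topology

/-- One-step energy decay of the semi-implicit scheme for the parabolic obstacle problem. -/
theorem stmt_10 {H : Type*} [NormedAddCommGroup H] [InnerProductSpace ℝ H]
    (K : Set H) (hKconv : Convex ℝ K)
    (J : H → ℝ) (J' : H →L[ℝ] ℝ) (A : H → H → ℝ)
    (hAlin₁ : ∀ v : H, IsLinearMap ℝ (fun u => A u v))
    (hAlin₂ : ∀ u : H, IsLinearMap ℝ (A u))
    (hAsymm : ∀ u v : H, A u v = A v u)
    (hApsd : ∀ u : H, 0 ≤ A u u)
    (vn vnp : H) (hvn : vn ∈ K) (hvnp : vnp ∈ K)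
    (τ c₁ : ℝ) (hτ : 0 < τ)
    (hscheme : ∀ ω ∈ K,
      0 ≤ (1/τ) * inner ℝ (vnp - vn) (ω - vnp) + J' (ω - vnp) + A (vnp - vn) (ω - vnp))
    (htaylor : J vnp ≤ J vn + J' (vnp - vn) + c₁ * ‖vnp - vn‖ ^ 2)
    (hτsmall : τ ≤ 1 / (1 + c₁)) :
    ‖vnp - vn‖ ^ 2 + J vnp ≤ J vn := by
  have hs := hscheme vn hvn
  have hneg : vn - vnp = -(vnp - vn) := by abel
  rw [hneg, inner_neg_right, map_neg, (hAlin₂ _).map_neg] at hs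
  rw [real_inner_self_eq_norm_sq] at hs
  have hA := hApsd (vnp - vn)
  have hJ' : J' (vnp - vn) ≤ -(1/τ) * ‖vnp - vn‖ ^ 2 := by nlinarith
  -- 1 + c₁ > 0
  have hc : 0 < 1 + c₁ := by
    by_contra h
    push_neg at h
    rcases lt_or_eq_of_le h with h' | h'
    · have : 1 / (1 + c₁) < 0 := div_neg_of_pos_of_neg one_pos h'
      linarith
    · rw [h', div_zero] at hτsmall
      linarith
  have hτ' : 1 + c₁ ≤ 1 / τ := by
    have h1 : τ * (1 + c₁) ≤ 1 := (le_div_iff₀ hc).mp hτsmall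
    rw [le_div_iff₀ hτ]
    nlinarith
  nlinarith [sq_nonneg ‖vnp - vn‖]
end

section
/- Let H be a Hilbert space and G_k a sequence of closed subspaces of H converging in the sense of Mosco to a closed subspace G. Let a : H × H → ℝ be a bounded coercive symmetric bilinear form and F ∈ H*. Let u_k ∈ G_k and u ∈ G be the unique solutions of a(u_k, φ) = F(φ) ∀φ ∈ G_k and a(u, φ) = F(φ) ∀φ ∈ G. Then u_k ⇀ u weakly in H and a(u_k, u_k) = F(u_k) → F(u) = a(u, u), provided F is sequentially continuous with respect to weak convergence restricted to bounded sets (e.g., F compactly factors through a compact embedding). -/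
open Filter Topology

lemma weak_seq_compact {H : Type*} [NormedAddCommGroup H] [InnerProductSpace ℝ H]
    [CompleteSpace H] (x : ℕ → H) (C : ℝ) (hC : ∀ k, ‖x k‖ ≤ C) :
    ∃ φ : ℕ → ℕ, StrictMono φ ∧ ∃ w : H,
      ∀ z : H, Tendsto (fun j => (inner ℝ (x (φ j)) z : ℝ)) atTop (𝓝 (inner ℝ w z)) := by
  have hC0 : 0 ≤ C := le_trans (norm_nonneg (x 0)) (hC 0)
  set K : Submodule ℝ H := (Submodule.span ℝ (Set.range x)).topologicalClosure with hK
  have hKcl : IsClosed (K : Set H) := Submodule.isClosed_topologicalClosure _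
  haveI : CompleteSpace K := hKcl.completeSpace_coe
  have hxK : ∀ k, x k ∈ K := fun k =>
    Submodule.le_topologicalClosure _ (Submodule.subset_span ⟨k, rfl⟩)
  -- separability of K
  have hsep : TopologicalSpace.IsSeparable (K : Set H) := by
    rw [hK, Submodule.topologicalClosure_coe]
    exact ((Set.countable_range x).isSeparable.span).closure
  obtain ⟨D, hDc, hKD⟩ := hsep
  obtain ⟨d, hd⟩ : ∃ d : ℕ → H, insert (0 : H) D = Set.range d :=
    (hDc.insert 0).exists_eq_range ⟨0, Set.mem_insert _ _⟩
  have hKd : (K : Set H) ⊆ closure (Set.range d) := by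
    rw [← hd]
    exact hKD.trans (closure_mono (Set.subset_insert _ _))
  -- diagonal extraction
  set f : ℕ → ℕ → ℝ := fun k n => inner ℝ (x k) (d n) with hf
  have hfS : ∀ k, f k ∈ Set.univ.pi fun n => Set.Icc (-(C * ‖d n‖)) (C * ‖d n‖) := by
    intro k n _
    have h1 : |(inner ℝ (x k) (d n) : ℝ)| ≤ C * ‖d n‖ := by
      refine (abs_real_inner_le_norm _ _).trans ?_
      exact mul_le_mul_of_nonneg_right (hC k) (norm_nonneg _)
    exact abs_le.1 h1
  have hcomp : IsCompact (Set.univ.pi fun n => Set.Icc (-(C * ‖d n‖)) (C * ‖d n‖)) :=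
    isCompact_univ_pi fun n => isCompact_Icc
  obtain ⟨g, -, φ, hφ, hconv⟩ := hcomp.isSeqCompact hfS
  have hpt : ∀ n, Tendsto (fun j => (inner ℝ (x (φ j)) (d n) : ℝ)) atTop (𝓝 (g n)) :=
    fun n => tendsto_pi_nhds.1 hconv n
  -- each inner ℝ product sequence is Cauchy
  have key : ∀ z : H, CauchySeq fun j => (inner ℝ (x (φ j)) z : ℝ) := by
    intro z
    set Pz : H := (K.orthogonalProjectionOnto z : H) with hPz
    have hinner : ∀ k, (inner ℝ (x k) z : ℝ) = inner ℝ (x k) Pz := by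
      intro k
      have h1 : z - Pz ∈ Kᗮ := K.sub_starProjection_mem_orthogonal z
      have h2 : (inner ℝ (x k) (z - Pz) : ℝ) = 0 :=
        (Submodule.mem_orthogonal K _).1 h1 (x k) (hxK k)
      rw [inner_sub_right] at h2
      linarith
    rw [Metric.cauchySeq_iff']
    intro ε hε
    -- approximate Pz by some d n₀
    have hPzK : Pz ∈ (K : Set H) := (K.orthogonalProjectionOnto z).2
    have hPzc : Pz ∈ closure (Set.range d) := hKd hPzK
    obtain ⟨y, ⟨n₀, rfl⟩, hy⟩ := Metric.mem_closure_iff.1 hPzc (ε / (4 * C + 4))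
      (by positivity)
    have hcs : CauchySeq fun j => (inner ℝ (x (φ j)) (d n₀) : ℝ) := (hpt n₀).cauchySeq
    obtain ⟨N, hN⟩ := Metric.cauchySeq_iff'.1 hcs (ε / 2) (by positivity)
    refine ⟨N, fun n hn => ?_⟩
    have hdist : dist Pz (d n₀) < ε / (4 * C + 4) := hy
    have e1 : ∀ j, (inner ℝ (x (φ j)) z : ℝ) =
        inner ℝ (x (φ j)) (d n₀) + inner ℝ (x (φ j)) (Pz - d n₀) := by
      intro j; rw [hinner, inner_sub_right]; ring
    have e2 : ∀ j, |(inner ℝ (x (φ j)) (Pz - d n₀) : ℝ)| ≤ C * (ε / (4 * C + 4)) := by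
      intro j
      refine (abs_real_inner_le_norm _ _).trans ?_
      have : ‖Pz - d n₀‖ ≤ ε / (4 * C + 4) := by
        rw [← dist_eq_norm]; exact le_of_lt hdist
      exact mul_le_mul (hC _) this (norm_nonneg _) hC0
    have h3 : |(inner ℝ (x (φ n)) (d n₀) : ℝ) - inner ℝ (x (φ N)) (d n₀)| < ε / 2 := by
      simpa [Real.dist_eq] using hN n hn
    have e5 := e2 n; have e6 := e2 N
    have hCb : C * (ε / (4 * C + 4)) ≤ ε / 4 := by
      have h4 : (0:ℝ) < 4 * C + 4 := by positivity
      rw [mul_div_assoc', div_le_div_iff₀ h4 (by norm_num : (0:ℝ) < 4)]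
      nlinarith [mul_nonneg hC0 hε.le]
    have hsplit : (inner ℝ (x (φ n)) z : ℝ) - inner ℝ (x (φ N)) z =
        ((inner ℝ (x (φ n)) (d n₀) : ℝ) - inner ℝ (x (φ N)) (d n₀)) +
          ((inner ℝ (x (φ n)) (Pz - d n₀) : ℝ) - inner ℝ (x (φ N)) (Pz - d n₀)) := by
      rw [e1 n, e1 N]; ring
    rw [Real.dist_eq, hsplit]
    calc |_ + _| ≤ |(inner ℝ (x (φ n)) (d n₀) : ℝ) - inner ℝ (x (φ N)) (d n₀)| +
          (|(inner ℝ (x (φ n)) (Pz - d n₀) : ℝ)| + |(inner ℝ (x (φ N)) (Pz - d n₀) : ℝ)|) :=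
        (abs_add_le _ _).trans (add_le_add_right (abs_sub _ _) _)
      _ < ε := by linarith
  -- limits define a bounded linear functional
  set L : H → ℝ := fun z => limUnder atTop fun j => (inner ℝ (x (φ j)) z : ℝ) with hL
  have hLt : ∀ z, Tendsto (fun j => (inner ℝ (x (φ j)) z : ℝ)) atTop (𝓝 (L z)) :=
    fun z => (key z).tendsto_limUnder
  have hlin : IsLinearMap ℝ L := by
    constructor
    · intro y z
      refine tendsto_nhds_unique (hLt (y + z)) ?_
      have := (hLt y).add (hLt z)
      simpa [inner_add_right] using this
    · intro c z
      refine tendsto_nhds_unique (hLt (c • z)) ?_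
      have := (hLt z).const_mul c
      simpa [real_inner_smul_right] using this
  have hbd : ∀ z, ‖L z‖ ≤ C * ‖z‖ := by
    intro z
    have : Tendsto (fun j => |(inner ℝ (x (φ j)) z : ℝ)|) atTop (𝓝 |L z|) := (hLt z).abs
    rw [Real.norm_eq_abs]
    refine le_of_tendsto' this fun j => ?_
    refine (abs_real_inner_le_norm _ _).trans ?_
    exact mul_le_mul_of_nonneg_right (hC _) (norm_nonneg _)
  set ℓ : H →L[ℝ] ℝ := LinearMap.mkContinuous (IsLinearMap.mk' L hlin) C hbd with hℓ
  refine ⟨φ, hφ, (InnerProductSpace.toDual ℝ H).symm ℓ, fun z => ?_⟩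
  have : (inner ℝ ((InnerProductSpace.toDual ℝ H).symm ℓ) z : ℝ) = ℓ z :=
    InnerProductSpace.toDual_symm_apply
  rw [this]
  exact hLt z

/-- Convergence of Galerkin/Mosco approximations: if `G_k → G` in the sense of Mosco and the
right-hand side is weakly sequentially continuous on bounded sets, then the solutions on `G_k`
converge weakly to the solution on `G` and the energies converge. -/
theorem stmt_15 {H : Type*} [NormedAddCommGroup H] [InnerProductSpace ℝ H] [CompleteSpace H]
    (G : Submodule ℝ H) (Gk : ℕ → Submodule ℝ H)
    (hGcl : IsClosed (G : Set H)) (hGkcl : ∀ k, IsClosed ((Gk k : Submodule ℝ H) : Set H))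
    -- Mosco condition (i): weak limits of (sub)sequences from `G_{k_j}` lie in `G`
    (hMosco₁ : ∀ (φ : ℕ → ℕ) (uj : ℕ → H) (w : H), StrictMono φ →
      (∀ j, uj j ∈ Gk (φ j)) →
      (∀ z : H, Tendsto (fun j => (inner ℝ (uj j) z : ℝ)) atTop (𝓝 (inner ℝ w z))) →
      w ∈ G)
    -- Mosco condition (ii): strong recovery sequences
    (hMosco₂ : ∀ w ∈ G, ∃ uk : ℕ → H, (∀ k, uk k ∈ Gk k) ∧
      Tendsto (fun k => ‖uk k - w‖) atTop (𝓝 0))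
    (a : H → H → ℝ) (M c₀ : ℝ) (hc₀ : 0 < c₀)
    (halin₁ : ∀ v : H, IsLinearMap ℝ (fun u => a u v))
    (halin₂ : ∀ u : H, IsLinearMap ℝ (a u))
    (hsymm : ∀ u v : H, a u v = a v u)
    (hbound : ∀ u v : H, |a u v| ≤ M * ‖u‖ * ‖v‖)
    (hcoer : ∀ u : H, c₀ * ‖u‖ ^ 2 ≤ a u u)
    (F : H →L[ℝ] ℝ)
    -- `F` is sequentially continuous w.r.t. weak convergence of bounded sequences
    (hFweak : ∀ (uj : ℕ → H) (w : H), (∃ C, ∀ j, ‖uj j‖ ≤ C) →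
      (∀ z : H, Tendsto (fun j => (inner ℝ (uj j) z : ℝ)) atTop (𝓝 (inner ℝ w z))) →
      Tendsto (fun j => F (uj j)) atTop (𝓝 (F w)))
    (uk : ℕ → H) (u : H)
    (hukmem : ∀ k, uk k ∈ Gk k) (humem : u ∈ G)
    (huk : ∀ k, ∀ φ ∈ Gk k, a (uk k) φ = F φ)
    (hu : ∀ φ ∈ G, a u φ = F φ) :
    (∀ z : H, Tendsto (fun k => (inner ℝ (uk k) z : ℝ)) atTop (𝓝 (inner ℝ u z))) ∧
    Tendsto (fun k => a (uk k) (uk k)) atTop (𝓝 (a u u)) := by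
  -- uniform bound on the solutions
  set Cb : ℝ := ‖F‖ / c₀ with hCbdef
  have hCb : ∀ k, ‖uk k‖ ≤ Cb := by
    intro k
    have h1 : c₀ * ‖uk k‖ ^ 2 ≤ a (uk k) (uk k) := hcoer _
    have h2 : a (uk k) (uk k) = F (uk k) := huk k _ (hukmem k)
    have h3 : F (uk k) ≤ ‖F‖ * ‖uk k‖ :=
      (le_abs_self _).trans ((F.le_opNorm _))
    rcases eq_or_lt_of_le (norm_nonneg (uk k)) with h0 | h0
    · rw [← h0, hCbdef]; positivity
    · rw [hCbdef, le_div_iff₀ hc₀]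
      nlinarith
  -- weak convergence against continuous linear functionals
  have hweakCLM : ∀ (y : ℕ → H) (w : H),
      (∀ z : H, Tendsto (fun j => (inner ℝ (y j) z : ℝ)) atTop (𝓝 (inner ℝ w z))) →
      ∀ T : H →L[ℝ] ℝ, Tendsto (fun j => T (y j)) atTop (𝓝 (T w)) := by
    intro y w hy T
    set r : H := (InnerProductSpace.toDual ℝ H).symm T with hr
    have hT : ∀ v : H, T v = inner ℝ v r := by
      intro v
      rw [real_inner_comm, hr, InnerProductSpace.toDual_symm_apply]
    simp_rw [hT]
    exact hy r
  -- identification of weak subsequence limits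
  have hident : ∀ ψ : ℕ → ℕ, StrictMono ψ → ∀ w : H,
      (∀ z : H, Tendsto (fun j => (inner ℝ (uk (ψ j)) z : ℝ)) atTop (𝓝 (inner ℝ w z))) →
      w = u := by
    intro ψ hψ w hw
    have hwG : w ∈ G := hMosco₁ ψ (uk ∘ ψ) w hψ (fun j => hukmem (ψ j)) hw
    have haw : ∀ v ∈ G, a w v = F v := by
      intro v hv
      obtain ⟨vk, hvkmem, hvkconv⟩ := hMosco₂ v hv
      have h1 : ∀ j, a (uk (ψ j)) (vk (ψ j)) = F (vk (ψ j)) :=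
        fun j => huk _ _ (hvkmem _)
      have hsub : Tendsto (fun j => ‖vk (ψ j) - v‖) atTop (𝓝 0) :=
        hvkconv.comp hψ.tendsto_atTop
      have hvconv : Tendsto (fun j => vk (ψ j)) atTop (𝓝 v) :=
        tendsto_iff_norm_sub_tendsto_zero.2 hsub
      have hFv : Tendsto (fun j => F (vk (ψ j))) atTop (𝓝 (F v)) :=
        (F.continuous.tendsto v).comp hvconv
      have h2 : ∀ j, a (uk (ψ j)) (vk (ψ j)) =
          a (uk (ψ j)) v + a (uk (ψ j)) (vk (ψ j) - v) := by
        intro j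
        have := (halin₂ (uk (ψ j))).map_add v (vk (ψ j) - v)
        rw [add_sub_cancel] at this
        exact this
      have h3 : Tendsto (fun j => a (uk (ψ j)) (vk (ψ j) - v)) atTop (𝓝 0) := by
        refine squeeze_zero_norm (a := fun j => (|M| * Cb) * ‖vk (ψ j) - v‖) ?_ ?_
        · intro j
          show ‖a (uk (ψ j)) (vk (ψ j) - v)‖ ≤ |M| * Cb * ‖vk (ψ j) - v‖
          rw [Real.norm_eq_abs]
          have hCb0 : (0:ℝ) ≤ Cb := le_trans (norm_nonneg (uk 0)) (hCb 0)
          calc |a (uk (ψ j)) (vk (ψ j) - v)|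
              ≤ M * ‖uk (ψ j)‖ * ‖vk (ψ j) - v‖ := hbound _ _
            _ ≤ |M| * ‖uk (ψ j)‖ * ‖vk (ψ j) - v‖ :=
                mul_le_mul_of_nonneg_right
                  (mul_le_mul_of_nonneg_right (le_abs_self M) (norm_nonneg _))
                  (norm_nonneg _)
            _ ≤ |M| * Cb * ‖vk (ψ j) - v‖ := by
                have h5 : ‖uk (ψ j)‖ ≤ Cb := hCb _
                gcongr
        · simpa using hsub.const_mul (|M| * Cb)
      have h4 : Tendsto (fun j => a (uk (ψ j)) v) atTop (𝓝 (a w v)) := by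
        have hlbd : ∀ z : H, ‖(fun x => a x v) z‖ ≤ (|M| * ‖v‖) * ‖z‖ := by
          intro z
          rw [Real.norm_eq_abs]
          calc |a z v| ≤ M * ‖z‖ * ‖v‖ := hbound _ _
            _ ≤ |M| * ‖z‖ * ‖v‖ :=
                mul_le_mul_of_nonneg_right
                  (mul_le_mul_of_nonneg_right (le_abs_self M) (norm_nonneg _))
                  (norm_nonneg _)
            _ = |M| * ‖v‖ * ‖z‖ := by ring
        exact hweakCLM _ _ hw
          (LinearMap.mkContinuous (IsLinearMap.mk' _ (halin₁ v)) (|M| * ‖v‖) hlbd)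
      have h5 : Tendsto (fun j => a (uk (ψ j)) (vk (ψ j))) atTop (𝓝 (a w v + 0)) := by
        simp_rw [h2]
        exact h4.add h3
      have h6 : Tendsto (fun j => a (uk (ψ j)) (vk (ψ j))) atTop (𝓝 (F v)) := by
        simp_rw [h1]
        exact hFv
      have := tendsto_nhds_unique h5 h6
      linarith
    have hm : w - u ∈ G := Submodule.sub_mem G hwG humem
    have hdiff : a (w - u) (w - u) = 0 := by
      have e1 : a w (w - u) = F (w - u) := haw _ hm
      have e2 : a u (w - u) = F (w - u) := hu _ hm
      have e3 : a (w - u) (w - u) = a w (w - u) - a u (w - u) :=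
        (halin₁ (w - u)).map_sub w u
      rw [e3, e1, e2]; ring
    have h7 : c₀ * ‖w - u‖ ^ 2 ≤ 0 := hdiff ▸ hcoer (w - u)
    have h8 : ‖w - u‖ ^ 2 = 0 :=
      le_antisymm (by nlinarith) (sq_nonneg _)
    have h9 : w - u = 0 := by
      rw [pow_eq_zero_iff (by norm_num : 2 ≠ 0)] at h8
      exact norm_eq_zero.1 h8
    exact sub_eq_zero.1 h9
  -- full weak convergence
  have hweakfull : ∀ z : H,
      Tendsto (fun k => (inner ℝ (uk k) z : ℝ)) atTop (𝓝 (inner ℝ u z)) := by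
    intro z
    by_contra hcon
    rw [Metric.tendsto_atTop] at hcon
    push_neg at hcon
    obtain ⟨ε, hε, hfreq⟩ := hcon
    obtain ⟨ns, hns, hnsP⟩ := extraction_of_frequently_atTop
      (frequently_atTop.2 fun N => (hfreq N).imp fun n ⟨h1, h2⟩ => ⟨h1, h2⟩)
    obtain ⟨ms, hms, w, hw⟩ := weak_seq_compact (uk ∘ ns) Cb (fun j => hCb (ns j))
    have hwu : w = u := hident (ns ∘ ms) (hns.comp hms) w hw
    subst hwu
    have hzc := hw z
    obtain ⟨N, hN⟩ := (Metric.tendsto_atTop.1 hzc) ε hε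
    exact absurd (hN N le_rfl) (not_lt.2 (hnsP (ms N)))
  refine ⟨hweakfull, ?_⟩
  have h1 : (fun k => a (uk k) (uk k)) = fun k => F (uk k) :=
    funext fun k => huk k _ (hukmem k)
  have h2 : a u u = F u := hu u humem
  rw [h1, h2]
  exact hFweak uk u ⟨Cb, hCb⟩ hweakfull
end
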